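/- Let Q be a left quasigroup and α, β congruences of Q such that C(α,β;0_Q) holds. Then the commutator subgroup [Dis_α, Dis_β] is trivial, and the pointwise stabilizers satisfy (Dis_β)_x = (Dis_β)_y whenever x α y. -/

import Mathlib

namespace PaperLQ

/-- A left quasigroup `(Q, ⬝, \)`: `x ⬝ (x \ y) = y = x \ (x ⬝ y)`. -/
structure LeftQuasigroup (Q : Type*) where
  mul : Q → Q → Q
  ldiv : Q → Q → Q
  mul_ldiv : ∀ x y, mul x (ldiv x y) = y
  ldiv_mul : ∀ x y, ldiv x (mul x y) = y

namespace LeftQuasigroup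

variable {Q : Type*}

/-- The left translation `L_x : y ↦ x ⬝ y`, as a permutation of `Q`. -/
def L (S : LeftQuasigroup Q) (x : Q) : Equiv.Perm Q where
  toFun := S.mul x
  invFun := S.ldiv x
  left_inv := S.ldiv_mul x
  right_inv := S.mul_ldiv x

/-- The left multiplication group `LMlt(Q) = ⟨L_x : x ∈ Q⟩`. -/
def LMlt (S : LeftQuasigroup Q) : Subgroup (Equiv.Perm Q) :=
  Subgroup.closure (Set.range S.L)

/-- The displacement group `Dis(Q) = ⟨L_x L_y⁻¹ : x, y ∈ Q⟩`. -/
def Dis (S : LeftQuasigroup Q) : Subgroup (Equiv.Perm Q) :=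
  Subgroup.closure {g : Equiv.Perm Q | ∃ x y : Q, g = S.L x * (S.L y)⁻¹}

/-- The orbit equivalence `O_N` of a subgroup `N`: `x O_N y` iff `x = h y` for some `h ∈ N`. -/
def orbRel (N : Subgroup (Equiv.Perm Q)) : Setoid Q where
  r x y := ∃ h ∈ N, x = h y
  iseqv := by
    constructor
    · exact fun x => ⟨1, N.one_mem, rfl⟩
    · rintro x y ⟨h, hh, rfl⟩
      exact ⟨h⁻¹, N.inv_mem hh, (Equiv.symm_apply_apply h y).symm⟩
    · rintro x y z ⟨h, hh, rfl⟩ ⟨k, hk, rfl⟩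
      exact ⟨h * k, N.mul_mem hh hk, (Equiv.Perm.mul_apply h k z).symm⟩

/-- The equivalence `c_N`: `x c_N y` iff `L_x L_y⁻¹ ∈ N`. -/
def cRel (S : LeftQuasigroup Q) (N : Subgroup (Equiv.Perm Q)) : Setoid Q where
  r x y := S.L x * (S.L y)⁻¹ ∈ N
  iseqv := by
    constructor
    · intro x; simpa using N.one_mem
    · intro x y h; simpa [mul_inv_rev] using N.inv_mem h
    · intro x y z h h'; simpa [mul_assoc] using N.mul_mem h h'

/-- The Cayley kernel `λ_Q`: `x λ_Q y` iff `L_x = L_y`. -/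
def cayley (S : LeftQuasigroup Q) : Setoid Q where
  r x y := S.L x = S.L y
  iseqv := ⟨fun _ => rfl, Eq.symm, Eq.trans⟩

/-- `α` is a congruence of the left quasigroup. -/
def IsCongruence (S : LeftQuasigroup Q) (α : Setoid Q) : Prop :=
  ∀ ⦃x y z t : Q⦄, α.r x z → α.r y t →
    α.r (S.mul x y) (S.mul z t) ∧ α.r (S.ldiv x y) (S.ldiv z t)

/-- The relative displacement group `Dis_α = ⟨h L_x L_y⁻¹ h⁻¹ : x α y, h ∈ LMlt(Q)⟩`. -/
def disRel (S : LeftQuasigroup Q) (α : Setoid Q) : Subgroup (Equiv.Perm Q) :=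
  Subgroup.closure
    {g : Equiv.Perm Q | ∃ x y h, α.r x y ∧ h ∈ S.LMlt ∧ g = h * (S.L x * (S.L y)⁻¹) * h⁻¹}

/-- The subgroup of permutations moving every point inside its `α`-class. -/
def apprSub (α : Setoid Q) : Subgroup (Equiv.Perm Q) where
  carrier := {h : Equiv.Perm Q | ∀ x : Q, α.r (h x) x}
  one_mem' := fun x => by
    simpa using α.iseqv.refl x
  mul_mem' := fun {a b} ha hb x => by
    rw [Equiv.Perm.mul_apply]
    exact α.iseqv.trans (ha (b x)) (hb x)
  inv_mem' := fun {a} ha x => by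
    have h := ha (a⁻¹ x)
    rw [Equiv.Perm.inv_def, Equiv.apply_symm_apply] at h
    exact α.iseqv.symm h

/-- The group `Dis^α = {h ∈ Dis(Q) : h(x) α x for all x}`. -/
def disCo (S : LeftQuasigroup Q) (α : Setoid Q) : Subgroup (Equiv.Perm Q) :=
  S.Dis ⊓ apprSub α

/-- `N ∈ Norm'(Q)`: a normal subgroup of `LMlt(Q)` with `N ≤ Dis(Q)` and `O_N ≤ c_N`. -/
def MemNorm' (S : LeftQuasigroup Q) (N : Subgroup (Equiv.Perm Q)) : Prop :=
  N ≤ S.Dis ∧ (∀ h ∈ S.LMlt, ∀ n ∈ N, h * n * h⁻¹ ∈ N) ∧ orbRel N ≤ S.cRel N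

/-- The quotient left quasigroup `Q/α` for a congruence `α`. -/
def quot (S : LeftQuasigroup Q) (α : Setoid Q) (hα : S.IsCongruence α) :
    LeftQuasigroup (Quotient α) where
  mul := Quotient.lift₂ (fun x y => Quotient.mk α (S.mul x y))
    (fun _ _ _ _ h h' => Quotient.sound (hα h h').1)
  ldiv := Quotient.lift₂ (fun x y => Quotient.mk α (S.ldiv x y))
    (fun _ _ _ _ h h' => Quotient.sound (hα h h').2)
  mul_ldiv := fun a b => Quotient.inductionOn₂ a b fun x y => by
    show Quotient.mk α (S.mul x (S.ldiv x y)) = Quotient.mk α y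
    rw [S.mul_ldiv]
  ldiv_mul := fun a b => Quotient.inductionOn₂ a b fun x y => by
    show Quotient.mk α (S.ldiv x (S.mul x y)) = Quotient.mk α y
    rw [S.ldiv_mul]

/-- The image `π_α(N)` of a subgroup `N ≤ LMlt(Q)` in `Sym(Q/α)`: the permutations of
`Q/α` induced by some element of `N`. -/
def pushSub (α : Setoid Q) (N : Subgroup (Equiv.Perm Q)) :
    Subgroup (Equiv.Perm (Quotient α)) where
  carrier := {g | ∃ h ∈ N, ∀ x : Q, g (Quotient.mk α x) = Quotient.mk α (h x)}
  one_mem' := ⟨1, N.one_mem, fun x => rfl⟩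
  mul_mem' := fun {g₁ g₂} h₁ h₂ => by
    obtain ⟨k₁, hk₁, e₁⟩ := h₁
    obtain ⟨k₂, hk₂, e₂⟩ := h₂
    exact ⟨k₁ * k₂, N.mul_mem hk₁ hk₂, fun x => by
      rw [Equiv.Perm.mul_apply, Equiv.Perm.mul_apply, e₂ x, e₁ (k₂ x)]⟩
  inv_mem' := fun {g} h => by
    obtain ⟨k, hk, e⟩ := h
    refine ⟨k⁻¹, N.inv_mem hk, fun x => ?_⟩
    have h' := e (k⁻¹ x)
    rw [Equiv.Perm.inv_def, Equiv.apply_symm_apply] at h'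
    rw [← h', Equiv.Perm.inv_def, Equiv.symm_apply_apply]
    rfl

/-- `Q` is faithful if the Cayley kernel is trivial. -/
def Faithful (S : LeftQuasigroup Q) : Prop := S.cayley = ⊥

/-- `Q` is sharp: whenever `α ≤ β` are congruences with `β/α ≤ λ_{Q/α}`, then `α = β`. -/
def Sharp (S : LeftQuasigroup Q) : Prop :=
  ∀ (α β : Setoid Q) (hα : S.IsCongruence α), S.IsCongruence β → α ≤ β →
    (∀ x y : Q, β.r x y →
      (S.quot α hα).L (Quotient.mk α x) = (S.quot α hα).L (Quotient.mk α y)) →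
    α = β

/-- `Q` has congruences determined by orbits: `Dis^* : Con(Q) → Norm'(Q)` and
`O_* : Norm'(Q) → Con(Q)` are mutually inverse isomorphisms. -/
def CDOs (S : LeftQuasigroup Q) : Prop :=
  (∀ α : Setoid Q, S.IsCongruence α → orbRel (S.disCo α) = α) ∧
  (∀ N : Subgroup (Equiv.Perm Q), S.MemNorm' N → S.disCo (orbRel N) = N)

/-- `Q` has congruences determined by subgroups: `Dis_* : Con(Q) → Norm'(Q)` and
`c_* : Norm'(Q) → Con(Q)` are mutually inverse isomorphisms. -/
def CDSg (S : LeftQuasigroup Q) : Prop :=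
  (∀ α : Setoid Q, S.IsCongruence α → S.cRel (S.disRel α) = α) ∧
  (∀ N : Subgroup (Equiv.Perm Q), S.MemNorm' N → S.disRel (S.cRel N) = N)

/-- `Q` is connected: `LMlt(Q)` acts transitively. -/
def Connected (S : LeftQuasigroup Q) : Prop :=
  ∀ x y : Q, ∃ h ∈ S.LMlt, x = h y

/-- The subalgebra structure on a subset closed under `⬝` and `\`. -/
def sub (S : LeftQuasigroup Q) (T : Set Q)
    (hm : ∀ ⦃x⦄, x ∈ T → ∀ ⦃y⦄, y ∈ T → S.mul x y ∈ T)
    (hd : ∀ ⦃x⦄, x ∈ T → ∀ ⦃y⦄, y ∈ T → S.ldiv x y ∈ T) : LeftQuasigroup T where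
  mul a b := ⟨S.mul a b, hm a.2 b.2⟩
  ldiv a b := ⟨S.ldiv a b, hd a.2 b.2⟩
  mul_ldiv a b := Subtype.ext (S.mul_ldiv a b)
  ldiv_mul a b := Subtype.ext (S.ldiv_mul a b)

/-- `Q` is superconnected: every subalgebra is connected. -/
def Superconnected (S : LeftQuasigroup Q) : Prop :=
  ∀ (T : Set Q) (hm : ∀ ⦃x⦄, x ∈ T → ∀ ⦃y⦄, y ∈ T → S.mul x y ∈ T)
    (hd : ∀ ⦃x⦄, x ∈ T → ∀ ⦃y⦄, y ∈ T → S.ldiv x y ∈ T),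
    (S.sub T hm hd).Connected

/-- `Q` is idempotent: `x ⬝ x = x`. -/
def Idempotent (S : LeftQuasigroup Q) : Prop := ∀ x : Q, S.mul x x = x

/-- `Q` is latin: all right translations are bijective. -/
def Latin (S : LeftQuasigroup Q) : Prop :=
  ∀ x : Q, Function.Bijective fun y => S.mul y x

/-- `Q` is semiregular: the stabilizer of any point in `Dis(Q)` is trivial. -/
def Semiregular (S : LeftQuasigroup Q) : Prop :=
  ∀ x : Q, ∀ h ∈ S.Dis, h x = x → h = 1

/-- The term operations of a left quasigroup: the clone generated by `⬝` and `\`. -/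
inductive IsTermOp (S : LeftQuasigroup Q) : {n : ℕ} → ((Fin n → Q) → Q) → Prop
  | proj {n : ℕ} (i : Fin n) : IsTermOp S fun v => v i
  | mul {n : ℕ} {t s : (Fin n → Q) → Q} :
      IsTermOp S t → IsTermOp S s → IsTermOp S fun v => S.mul (t v) (s v)
  | ldiv {n : ℕ} {t s : (Fin n → Q) → Q} :
      IsTermOp S t → IsTermOp S s → IsTermOp S fun v => S.ldiv (t v) (s v)

/-- The centrality relation `C(α, β; δ)` of commutator theory. -/
def Centralizes (S : LeftQuasigroup Q) (α β δ : Setoid Q) : Prop :=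
  ∀ (n : ℕ) (t : (Fin (n + 1) → Q) → Q), S.IsTermOp t →
    ∀ x y : Q, α.r x y → ∀ z u : Fin n → Q, (∀ i, β.r (z i) (u i)) →
      δ.r (t (Fin.cons x z)) (t (Fin.cons x u)) →
      δ.r (t (Fin.cons y z)) (t (Fin.cons y u))

/-- The center `ζ_Q`: the largest central congruence. -/
def center (S : LeftQuasigroup Q) : Setoid Q :=
  sSup {β : Setoid Q | S.IsCongruence β ∧ S.Centralizes β ⊤ ⊥}

/-- The upper central series: `ζ_0 = 0_Q` and `ζ_{n+1}/ζ_n = ζ_{Q/ζ_n}`. -/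
def zeta (S : LeftQuasigroup Q) : ℕ → Setoid Q
  | 0 => ⊥
  | n + 1 =>
      sSup {β : Setoid Q | S.IsCongruence β ∧ S.zeta n ≤ β ∧ S.Centralizes β ⊤ (S.zeta n)}

/-- `Q` is nilpotent: the upper central series reaches `1_Q`. -/
def Nilpotent (S : LeftQuasigroup Q) : Prop := ∃ n : ℕ, S.zeta n = ⊤

/-- The variety generated by `Q` has a Malt'sev term. -/
def Maltsev (S : LeftQuasigroup Q) : Prop :=
  ∃ m : Q → Q → Q → Q,
    S.IsTermOp (n := 3) (fun v => m (v 0) (v 1) (v 2)) ∧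
    ∀ x y : Q, m x y y = x ∧ m y y x = x

/-- The central extension `E = Aff(Q, A, g, f, θ)` of `Q` by an abelian group `A`. -/
def affExt (S : LeftQuasigroup Q) (A : Type*) [AddCommGroup A]
    (g : A →+ A) (f : AddAut A) (θ : Q → Q → A) : LeftQuasigroup (Q × A) where
  mul p q := (S.mul p.1 q.1, g p.2 + f q.2 + θ p.1 q.1)
  ldiv p q := (S.ldiv p.1 q.1, f.symm (q.2 - g p.2 - θ p.1 (S.ldiv p.1 q.1)))
  mul_ldiv := by
    rintro ⟨x, a⟩ ⟨y, b⟩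
    dsimp only
    rw [S.mul_ldiv, AddEquiv.apply_symm_apply]
    refine Prod.ext rfl ?_
    dsimp only
    abel
  ldiv_mul := by
    rintro ⟨x, a⟩ ⟨y, b⟩
    dsimp only
    rw [S.ldiv_mul]
    refine Prod.ext rfl ?_
    dsimp only
    have h : g a + f b + θ x y - g a - θ x y = f b := by abel
    rw [h, AddEquiv.symm_apply_apply]

/-- The affine left quasigroup `Aff(A, g, f, c)`: `a ⬝ b = g(a) + f(b) + c`. -/
def affine {A : Type*} [AddCommGroup A] (g : A →+ A) (f : AddAut A) (c : A) :
    LeftQuasigroup A where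
  mul a b := g a + f b + c
  ldiv a b := f.symm (b - g a - c)
  mul_ldiv := by
    intro a b
    rw [AddEquiv.apply_symm_apply]
    abel
  ldiv_mul := by
    intro a b
    have h : g a + f b + c - g a - c = f b := by abel
    rw [h, AddEquiv.symm_apply_apply]

/-- The relation `α_N` on `Q × A`: `(x,a) α_N (y,b)` iff `x = y` and `a - b ∈ N`. -/
def prodCongr (Q : Type*) {A : Type*} [AddCommGroup A] (N : AddSubgroup A) :
    Setoid (Q × A) where
  r p q := p.1 = q.1 ∧ p.2 - q.2 ∈ N
  iseqv := by
    constructor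
    · exact fun p => ⟨rfl, by simpa using N.zero_mem⟩
    · rintro p q ⟨h1, h2⟩
      exact ⟨h1.symm, by simpa using N.neg_mem h2⟩
    · rintro p q r ⟨h1, h2⟩ ⟨h1', h2'⟩
      exact ⟨h1.trans h1', by simpa [sub_add_sub_cancel] using N.add_mem h2 h2'⟩



section Aux
-- aux starts here
variable (S : LeftQuasigroup Q)

lemma L_apply (x w : Q) : S.L x w = S.mul x w := rfl
lemma L_inv_apply (x w : Q) : (S.L x)⁻¹ w = S.ldiv x w := rfl

lemma isTermOp_comp {n m : ℕ} {t : (Fin n → Q) → Q} (ht : S.IsTermOp t)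
    {s : Fin n → (Fin m → Q) → Q} (hs : ∀ i, S.IsTermOp (s i)) :
    S.IsTermOp (fun v => t (fun i => s i v)) := by
  induction ht with
  | proj i => exact hs i
  | mul _ _ ih1 ih2 => exact .mul ih1 ih2
  | ldiv _ _ ih1 ih2 => exact .ldiv ih1 ih2

def Termic {n : ℕ} (F : (Fin n → Q) → Q → Q) : Prop :=
  S.IsTermOp (n := n + 1) (fun v => F (fun i => v i.succ) (v 0))

lemma termicApply {n m : ℕ} {F : (Fin n → Q) → Q → Q} (hF : S.Termic F)
    (σ : Fin n → Fin m) {g : (Fin m → Q) → Q} (hg : S.IsTermOp g) :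
    S.IsTermOp (fun v : Fin m → Q => F (fun i => v (σ i)) (g v)) := by
  have h := S.isTermOp_comp hF (s := Fin.cases g (fun i v => v (σ i)))
    (fun i => by
      induction i using Fin.cases with
      | zero => simpa using hg
      | succ j => simpa using IsTermOp.proj (S := S) (σ j))
  exact h


lemma lmlt_rep {h : Equiv.Perm Q} (hh : h ∈ S.LMlt) :
    ∃ (m : ℕ) (c : Fin m → Q) (H H' : (Fin m → Q) → Q → Q),
      (∀ w, H c w = h w) ∧ (∀ w, H' c w = h⁻¹ w) ∧ S.Termic H ∧ S.Termic H' := by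
  induction hh using Subgroup.closure_induction with
  | mem g hg =>
    obtain ⟨x, rfl⟩ := hg
    exact ⟨1, fun _ => x, fun p w => S.mul (p 0) w, fun p w => S.ldiv (p 0) w,
      fun w => rfl, fun w => rfl,
      .mul (.proj (Fin.succ 0)) (.proj 0), .ldiv (.proj (Fin.succ 0)) (.proj 0)⟩
  | one =>
    exact ⟨0, fun i => i.elim0, fun _ w => w, fun _ w => w,
      fun w => rfl, fun w => rfl, .proj 0, .proj 0⟩
  | mul a b ha hb iha ihb =>
    obtain ⟨m1, c1, H1, H1', e1, e1', t1, t1'⟩ := iha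
    obtain ⟨m2, c2, H2, H2', e2, e2', t2, t2'⟩ := ihb
    refine ⟨m1 + m2, Fin.append c1 c2,
      fun p w => H1 (fun i => p (Fin.castAdd m2 i)) (H2 (fun i => p (Fin.natAdd m1 i)) w),
      fun p w => H2' (fun i => p (Fin.natAdd m1 i)) (H1' (fun i => p (Fin.castAdd m2 i)) w),
      ?_, ?_, ?_, ?_⟩
    · intro w
      simp [Fin.append_left, Fin.append_right, e1, e2, Equiv.Perm.mul_apply]
    · intro w
      simp [Fin.append_left, Fin.append_right, e1', e2', mul_inv_rev, Equiv.Perm.mul_apply]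
    · exact S.termicApply t1 (fun i => (Fin.castAdd m2 i).succ)
        (S.termicApply t2 (fun i => (Fin.natAdd m1 i).succ) (.proj 0))
    · exact S.termicApply t2' (fun i => (Fin.natAdd m1 i).succ)
        (S.termicApply t1' (fun i => (Fin.castAdd m2 i).succ) (.proj 0))
  | inv a ha iha =>
    obtain ⟨m, c, H, H', e, e', t, t'⟩ := iha
    exact ⟨m, c, H', H, e', by simpa using e, t', t⟩


lemma disRel_rep (β : Setoid Q) {f : Equiv.Perm Q} (hf : f ∈ S.disRel β) :
    ∃ (n : ℕ) (z u : Fin n → Q) (F F' : (Fin n → Q) → Q → Q),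
      (∀ i, β.r (z i) (u i)) ∧
      (∀ w, F z w = f w) ∧ (∀ w, F' z w = f⁻¹ w) ∧
      (∀ w, F u w = w) ∧ (∀ w, F' u w = w) ∧ S.Termic F ∧ S.Termic F' := by
  induction hf using Subgroup.closure_induction with
  | mem g hg =>
    obtain ⟨a, b, h, hab, hh, rfl⟩ := hg
    obtain ⟨m, c, H, H', e, e', t, t'⟩ := S.lmlt_rep hh
    refine ⟨m + 2, Fin.append c ![a, b], Fin.append c ![b, b],
      fun p w => H (fun i => p (Fin.castAdd 2 i))
        (S.mul (p (Fin.natAdd m 0))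
          (S.ldiv (p (Fin.natAdd m 1)) (H' (fun i => p (Fin.castAdd 2 i)) w))),
      fun p w => H (fun i => p (Fin.castAdd 2 i))
        (S.mul (p (Fin.natAdd m 1))
          (S.ldiv (p (Fin.natAdd m 0)) (H' (fun i => p (Fin.castAdd 2 i)) w))),
      ?_, ?_, ?_, ?_, ?_, ?_, ?_⟩
    · intro i
      refine Fin.addCases (fun j => ?_) (fun j => ?_) i
      · simpa [Fin.append_left] using β.iseqv.refl (c j)
      · induction j using Fin.cases with
        | zero => simpa [Fin.append_right] using hab
        | succ k =>
          have : k = 0 := Subsingleton.elim k 0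
          subst this
          simpa [Fin.append_right] using β.iseqv.refl b
    · intro w
      simp [Fin.append_left, Fin.append_right, e, e', Equiv.Perm.mul_apply,
        L_apply, L_inv_apply]
    · intro w
      simp [Fin.append_left, Fin.append_right, e, e', mul_inv_rev, Equiv.Perm.mul_apply,
        L_apply, L_inv_apply]
    · intro w
      simp [Fin.append_left, Fin.append_right, e, e', S.mul_ldiv]
    · intro w
      simp [Fin.append_left, Fin.append_right, e, e', S.mul_ldiv]
    · exact S.termicApply t (fun i => (Fin.castAdd 2 i).succ)
        (.mul (.proj ((Fin.natAdd m 0).succ))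
          (.ldiv (.proj ((Fin.natAdd m 1).succ))
            (S.termicApply t' (fun i => (Fin.castAdd 2 i).succ) (.proj 0))))
    · exact S.termicApply t (fun i => (Fin.castAdd 2 i).succ)
        (.mul (.proj ((Fin.natAdd m 1).succ))
          (.ldiv (.proj ((Fin.natAdd m 0).succ))
            (S.termicApply t' (fun i => (Fin.castAdd 2 i).succ) (.proj 0))))
  | one =>
    exact ⟨0, fun i => i.elim0, fun i => i.elim0, fun _ w => w, fun _ w => w,
      fun i => i.elim0, fun w => rfl, fun w => rfl, fun w => rfl, fun w => rfl,
      .proj 0, .proj 0⟩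
  | mul a b ha hb iha ihb =>
    obtain ⟨n1, z1, u1, F1, F1', r1, e1, e1', q1, q1', t1, t1'⟩ := iha
    obtain ⟨n2, z2, u2, F2, F2', r2, e2, e2', q2, q2', t2, t2'⟩ := ihb
    refine ⟨n1 + n2, Fin.append z1 z2, Fin.append u1 u2,
      fun p w => F1 (fun i => p (Fin.castAdd n2 i)) (F2 (fun i => p (Fin.natAdd n1 i)) w),
      fun p w => F2' (fun i => p (Fin.natAdd n1 i)) (F1' (fun i => p (Fin.castAdd n2 i)) w),
      ?_, ?_, ?_, ?_, ?_, ?_, ?_⟩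
    · intro i
      refine Fin.addCases (fun j => ?_) (fun j => ?_) i
      · simpa [Fin.append_left] using r1 j
      · simpa [Fin.append_right] using r2 j
    · intro w; simp [Fin.append_left, Fin.append_right, e1, e2, Equiv.Perm.mul_apply]
    · intro w
      simp [Fin.append_left, Fin.append_right, e1', e2', mul_inv_rev, Equiv.Perm.mul_apply]
    · intro w; simp [Fin.append_left, Fin.append_right, q1, q2]
    · intro w; simp [Fin.append_left, Fin.append_right, q1', q2']
    · exact S.termicApply t1 (fun i => (Fin.castAdd n2 i).succ)
        (S.termicApply t2 (fun i => (Fin.natAdd n1 i).succ) (.proj 0))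
    · exact S.termicApply t2' (fun i => (Fin.natAdd n1 i).succ)
        (S.termicApply t1' (fun i => (Fin.castAdd n2 i).succ) (.proj 0))
  | inv a ha iha =>
    obtain ⟨n, z, u, F, F', r, e, e', q, q', t, t'⟩ := iha
    exact ⟨n, z, u, F', F, r, e', by simpa using e, q', q, t', t⟩


lemma stab_of_centralizes {α β : Setoid Q} (hc : S.Centralizes α β ⊥)
    {x y : Q} (hxy : α.r x y) {f : Equiv.Perm Q} (hf : f ∈ S.disRel β)
    (hfx : f x = x) : f y = y := by
  obtain ⟨n, z, u, F, F', r, e, e', q, q', t, t'⟩ := S.disRel_rep β hf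
  have hx : F (fun i => (Fin.cons x z : Fin (n+1) → Q) i.succ) ((Fin.cons x z : Fin (n+1) → Q) 0)
      = F (fun i => (Fin.cons x u : Fin (n+1) → Q) i.succ) ((Fin.cons x u : Fin (n+1) → Q) 0) := by
    simp only [Fin.cons_succ, Fin.cons_zero]
    rw [e, q, hfx]
  have key := hc n (fun v => F (fun i => v i.succ) (v 0)) t x y hxy z u r hx
  simp only [Fin.cons_succ, Fin.cons_zero] at key
  rw [e, q] at key
  exact key

lemma commute_of_centralizes {α β : Setoid Q} (hc : S.Centralizes α β ⊥)
    {x y : Q} (hxy : α.r x y) {f : Equiv.Perm Q} (hf : f ∈ S.disRel β) :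
    ∀ w, f (S.mul x (S.ldiv y w)) = S.mul x (S.ldiv y (f w)) := by
  obtain ⟨n, z, u, F, F', r, e, e', q, q', t, t'⟩ := S.disRel_rep β hf
  intro w
  set N := n + (n + 2) with hN
  let oSlot : Fin n → Fin N := fun i => Fin.castAdd (n + 2) i
  let iSlot : Fin n → Fin N := fun i => Fin.natAdd n (Fin.castAdd 2 i)
  let ySlot : Fin N := Fin.natAdd n (Fin.natAdd n 0)
  let wSlot : Fin N := Fin.natAdd n (Fin.natAdd n 1)
  let Z : Fin N → Q := Fin.append z (Fin.append u ![y, w])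
  let U : Fin N → Q := Fin.append u (Fin.append z ![y, w])
  let T : (Fin (N + 1) → Q) → Q := fun v =>
    F (fun i => v (oSlot i).succ)
      (S.mul (v 0) (S.ldiv (v ySlot.succ) (F (fun i => v (iSlot i).succ) (v wSlot.succ))))
  have hT : S.IsTermOp T := S.termicApply t (fun i => (oSlot i).succ)
    (.mul (.proj 0) (.ldiv (.proj ySlot.succ)
      (S.termicApply t (fun i => (iSlot i).succ) (.proj wSlot.succ))))
  have hr : ∀ i, β.r (Z i) (U i) := by
    intro i
    refine Fin.addCases (fun j => ?_) (fun j => ?_) i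
    · simpa [Z, U, Fin.append_left] using r j
    · refine Fin.addCases (fun k => ?_) (fun k => ?_) j
      · simpa [Z, U, Fin.append_right, Fin.append_left] using β.iseqv.symm (r k)
      · have hz : Z (Fin.natAdd n (Fin.natAdd n k)) = ![y, w] k := by
          simp [Z, Fin.append_right]
        have hu : U (Fin.natAdd n (Fin.natAdd n k)) = ![y, w] k := by
          simp [U, Fin.append_right]
        rw [hz, hu]
  have hyp : T (Fin.cons y Z) = T (Fin.cons y U) := by
    simp only [T, Z, U, oSlot, iSlot, ySlot, wSlot, Fin.cons_succ, Fin.cons_zero, Fin.append_left, Fin.append_right,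
      Matrix.cons_val_zero, Matrix.cons_val_one, Matrix.head_cons, q, e, S.mul_ldiv]
  have key := hc N T hT y x (α.iseqv.symm hxy) Z U hr hyp
  simp only [T, Z, U, oSlot, iSlot, ySlot, wSlot, Fin.cons_succ, Fin.cons_zero, Fin.append_left, Fin.append_right,
    Matrix.cons_val_zero, Matrix.cons_val_one, Matrix.head_cons, q, e, S.mul_ldiv] at key
  exact key

lemma disRel_conj (β : Setoid Q) {h : Equiv.Perm Q} (hh : h ∈ S.LMlt)
    {f : Equiv.Perm Q} (hf : f ∈ S.disRel β) : h * f * h⁻¹ ∈ S.disRel β := by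
  induction hf using Subgroup.closure_induction with
  | mem g hg =>
    obtain ⟨a, b, k, hab, hk, rfl⟩ := hg
    refine Subgroup.subset_closure ⟨a, b, h * k, hab, S.LMlt.mul_mem hh hk, ?_⟩
    group
  | one => simpa using (S.disRel β).one_mem
  | mul a b ha hb iha ihb =>
    have e : h * (a * b) * h⁻¹ = (h * a * h⁻¹) * (h * b * h⁻¹) := by group
    rw [e]; exact mul_mem iha ihb
  | inv a ha iha =>
    have e : h * a⁻¹ * h⁻¹ = (h * a * h⁻¹)⁻¹ := by group
    rw [e]; exact inv_mem iha

end Aux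

/-- If `C(α,β;0_Q)` holds, then `[Dis_α, Dis_β] = 1` and `(Dis_β)_x = (Dis_β)_y`
whenever `x α y`. -/
theorem statement_19 {Q : Type*} (S : LeftQuasigroup Q) (α β : Setoid Q)
    (hα : S.IsCongruence α) (hβ : S.IsCongruence β)
    (hc : S.Centralizes α β ⊥) :
    ⁅S.disRel α, S.disRel β⁆ = (⊥ : Subgroup (Equiv.Perm Q)) ∧
    ∀ x y : Q, α.r x y → ∀ h ∈ S.disRel β, (h x = x ↔ h y = y) := by
  constructor
  · rw [Subgroup.commutator_eq_bot_iff_le_centralizer]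
    refine (Subgroup.closure_le _).mpr ?_
    rintro g ⟨a, b, h, hab, hh, rfl⟩
    rw [SetLike.mem_coe, Subgroup.mem_centralizer_iff]
    intro f hf
    have hf' : h⁻¹ * f * h ∈ S.disRel β := by
      have := S.disRel_conj β (S.LMlt.inv_mem hh) hf
      simpa using this
    have comm := S.commute_of_centralizes hc hab hf'
    have gcomm : (S.L a * (S.L b)⁻¹) * (h⁻¹ * f * h)
        = (h⁻¹ * f * h) * (S.L a * (S.L b)⁻¹) := by
      ext w
      have hw := comm w
      simp only [Equiv.Perm.mul_apply, L_apply, L_inv_apply] at hw ⊢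
      exact hw.symm
    have lhs : h * ((S.L a * (S.L b)⁻¹) * (h⁻¹ * f * h)) * h⁻¹
        = (h * (S.L a * (S.L b)⁻¹) * h⁻¹) * f := by group
    have rhs : h * ((h⁻¹ * f * h) * (S.L a * (S.L b)⁻¹)) * h⁻¹
        = f * (h * (S.L a * (S.L b)⁻¹) * h⁻¹) := by group
    have key : h * ((S.L a * (S.L b)⁻¹) * (h⁻¹ * f * h)) * h⁻¹
        = h * ((h⁻¹ * f * h) * (S.L a * (S.L b)⁻¹)) * h⁻¹ := by rw [gcomm]
    exact ((lhs.symm.trans key).trans rhs).symm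
  · intro x y hxy f hf
    exact ⟨fun hx => S.stab_of_centralizes hc hxy hf hx,
      fun hy => S.stab_of_centralizes hc (α.iseqv.symm hxy) hf hy⟩


end LeftQuasigroup

end PaperLQ
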